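/- The squared 2-Wasserstein distance between two probability measures on ℝ with distribution functions F and G equals the integral over [0,1] of (F^{-1}(t) - G^{-1}(t))^2 dt, where F^{-1} and G^{-1} are the quantile functions. -/

import Mathlib

open MeasureTheory Set

/-- The quantile function of a distribution function `F`: `F⁻¹(t) = inf {x : F x ≥ t}`. -/
noncomputable def quantile (F : ℝ → ℝ) (t : ℝ) : ℝ := sInf {x : ℝ | t ≤ F x}

open ProbabilityTheory Filter

lemma cdf_fun_eq (μ : Measure ℝ) [IsProbabilityMeasure μ] :
    (fun x => (μ (Iic x)).toReal) = ⇑(cdf μ) := funext fun x => (cdf_eq_real μ x).symm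

variable {μ : Measure ℝ} [IsProbabilityMeasure μ]

lemma quantile_set_nonempty (μ : Measure ℝ) [IsProbabilityMeasure μ] {t : ℝ} (ht : t < 1) :
    {x : ℝ | t ≤ cdf μ x}.Nonempty := by
  have h := (tendsto_cdf_atTop μ).eventually (eventually_gt_nhds ht)
  obtain ⟨x, hx⟩ := h.exists
  exact ⟨x, hx.le⟩

lemma quantile_set_bddBelow (μ : Measure ℝ) [IsProbabilityMeasure μ] {t : ℝ} (ht : 0 < t) :
    BddBelow {x : ℝ | t ≤ cdf μ x} := by
  have h := (tendsto_cdf_atBot μ).eventually (eventually_lt_nhds ht)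
  obtain ⟨x0, hx0⟩ := h.exists
  refine ⟨x0, fun y hy => ?_⟩
  by_contra hlt
  push_neg at hlt
  exact absurd (le_trans hy (monotone_cdf μ hlt.le)) (not_le.2 hx0)

lemma quantile_cdf_le_iff {t : ℝ} (ht : t ∈ Ioo (0:ℝ) 1) (x : ℝ) :
    quantile (cdf μ) t ≤ x ↔ t ≤ cdf μ x := by
  constructor
  · intro h
    have hne := quantile_set_nonempty μ ht.2
    have hev : ∀ᶠ y in nhdsWithin x (Ioi x), t ≤ cdf μ y := by
      refine eventually_mem_nhdsWithin.mono fun y hy => ?_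
      obtain ⟨z, hz, hzy⟩ := exists_lt_of_csInf_lt hne (lt_of_le_of_lt h hy)
      exact le_trans hz (monotone_cdf μ hzy.le)
    exact ge_of_tendsto (((cdf μ).right_continuous x).mono_left
      (nhdsWithin_mono x (Ioi_subset_Ici le_rfl))) hev
  · intro h
    exact csInf_le (quantile_set_bddBelow μ ht.1) h

lemma quantile_nonpos_arg {t : ℝ} (ht : t ≤ 0) : quantile (cdf μ) t = 0 := by
  have : {x : ℝ | t ≤ cdf μ x} = univ := eq_univ_of_forall fun x => le_trans ht (cdf_nonneg μ x)
  rw [quantile, this, csInf_of_not_bddBelow (by simpa using not_bddBelow_univ)]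
  exact Real.sInf_empty

lemma quantile_gt_one_arg {t : ℝ} (ht : 1 < t) : quantile (cdf μ) t = 0 := by
  have : {x : ℝ | t ≤ cdf μ x} = ∅ := by
    ext x; simp only [mem_setOf_eq, mem_empty_iff_false, iff_false, not_le]
    exact lt_of_le_of_lt (cdf_le_one μ x) ht
  rw [quantile, this]
  exact Real.sInf_empty

lemma measurable_quantile_cdf (μ : Measure ℝ) [IsProbabilityMeasure μ] :
    Measurable (quantile (cdf μ)) := by
  apply measurable_of_Iic
  intro x
  have key : quantile (cdf μ) ⁻¹' Iic x =
      (Ioo (0:ℝ) 1 ∩ Iic (cdf μ x)) ∪ ((Iic (0:ℝ) ∪ Ioi 1) ∩ {t : ℝ | (0:ℝ) ≤ x}) ∪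
        ({(1:ℝ)} ∩ {t : ℝ | quantile (cdf μ) 1 ≤ x}) := by
    ext t
    simp only [mem_preimage, mem_Iic, mem_union, mem_inter_iff, mem_Ioo, mem_setOf_eq,
      mem_singleton_iff]
    constructor
    · intro h
      rcases le_or_gt t 0 with h0 | h0
      · exact Or.inl (Or.inr ⟨Or.inl h0, by rwa [quantile_nonpos_arg h0] at h⟩)
      · rcases lt_trichotomy t 1 with h1 | h1 | h1
        · exact Or.inl (Or.inl ⟨⟨h0, h1⟩, (quantile_cdf_le_iff ⟨h0, h1⟩ x).mp h⟩)
        · exact Or.inr ⟨h1, h1 ▸ h⟩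
        · exact Or.inl (Or.inr ⟨Or.inr h1, by rwa [quantile_gt_one_arg h1] at h⟩)
    · rintro ((⟨ht, hle⟩ | ⟨ht, hx⟩) | ⟨ht, hle⟩)
      · exact (quantile_cdf_le_iff ht x).mpr hle
      · rcases ht with ht | ht
        · rwa [quantile_nonpos_arg ht]
        · rwa [quantile_gt_one_arg ht]
      · rw [ht]; exact hle
  rw [key]
  have h1 : MeasurableSet {t : ℝ | (0:ℝ) ≤ x} := by
    by_cases h : (0:ℝ) ≤ x <;> simp [h]
  have h2 : MeasurableSet {t : ℝ | quantile (cdf μ) 1 ≤ x} := by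
    by_cases h : quantile (cdf μ) 1 ≤ x <;> simp [h]
  exact ((measurableSet_Ioo.inter measurableSet_Iic).union
    ((measurableSet_Iic.union measurableSet_Ioi).inter h1)).union
    ((measurableSet_singleton _).inter h2)

instance : IsProbabilityMeasure (volume.restrict (Ioo (0:ℝ) 1)) :=
  ⟨by simp [Real.volume_Ioo]⟩

lemma map_quantile_cdf (μ : Measure ℝ) [IsProbabilityMeasure μ] :
    (volume.restrict (Ioo (0:ℝ) 1)).map (quantile (cdf μ)) = μ := by
  have hmeas := measurable_quantile_cdf μ
  have : IsProbabilityMeasure ((volume.restrict (Ioo (0:ℝ) 1)).map (quantile (cdf μ))) :=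
    Measure.isProbabilityMeasure_map hmeas.aemeasurable
  refine Measure.ext_of_Iic _ _ fun x => ?_
  rw [Measure.map_apply hmeas measurableSet_Iic,
    Measure.restrict_apply (hmeas measurableSet_Iic)]
  have hset : quantile (cdf μ) ⁻¹' Iic x ∩ Ioo 0 1 = Ioo (0:ℝ) 1 ∩ Iic (cdf μ x) := by
    ext t
    simp only [mem_inter_iff, mem_preimage, mem_Iic, mem_Ioo, and_comm]
    exact and_congr_right fun ht => quantile_cdf_le_iff ht x
  rw [hset, ← ofReal_cdf μ x]
  have h0 : 0 ≤ cdf μ x := cdf_nonneg μ x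
  rcases lt_or_ge (cdf μ x) 1 with h1 | h1
  · have : Ioo (0:ℝ) 1 ∩ Iic (cdf μ x) = Ioc 0 (cdf μ x) := by
      ext t
      simp only [mem_inter_iff, mem_Ioo, mem_Iic, mem_Ioc]
      exact ⟨fun ⟨⟨a, _⟩, c⟩ => ⟨a, c⟩, fun ⟨a, c⟩ => ⟨⟨a, lt_of_le_of_lt c h1⟩, c⟩⟩
    rw [this, Real.volume_Ioc, sub_zero]
  · have h1' : cdf μ x = 1 := le_antisymm (cdf_le_one μ x) h1
    have : Ioo (0:ℝ) 1 ∩ Iic (cdf μ x) = Ioo 0 1 := by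
      rw [h1']
      exact inter_eq_left.2 fun t ht => le_of_lt ht.2
    rw [this, Real.volume_Ioo, h1']
    norm_num

lemma integrable_comp_quantile {f : ℝ → ℝ} (hf : Integrable f μ)
    (hfm : AEStronglyMeasurable f μ) :
    Integrable (fun t => f (quantile (cdf μ) t)) (volume.restrict (Ioo (0:ℝ) 1)) := by
  have h := (integrable_map_measure (by rwa [map_quantile_cdf])
    (measurable_quantile_cdf μ).aemeasurable).mp (by rwa [map_quantile_cdf])
  exact h

lemma integral_comp_quantile {f : ℝ → ℝ} (hfm : AEStronglyMeasurable f μ) :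
    ∫ t in Ioo (0:ℝ) 1, f (quantile (cdf μ) t) = ∫ x, f x ∂μ := by
  rw [show (∫ x, f x ∂μ) = ∫ x, f x ∂((volume.restrict (Ioo (0:ℝ) 1)).map (quantile (cdf μ)))
      from by rw [map_quantile_cdf],
    integral_map (measurable_quantile_cdf μ).aemeasurable (by rwa [map_quantile_cdf])]

/-- The kernel function `h s x = 1_{s < x} - 1_{s < 0}`. -/
noncomputable def hh (s x : ℝ) : ℝ := (if s < x then 1 else 0) - (if s < 0 then 1 else 0)

lemma hh_eq_indicator (x : ℝ) : (fun s => hh s x) =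
    (Ico (min x 0) (max x 0)).indicator (fun _ => if 0 ≤ x then (1:ℝ) else -1) := by
  funext s
  rcases le_or_gt 0 x with hx | hx
  · simp only [hh, min_eq_right hx, max_eq_left hx, indicator_apply, mem_Ico, hx, if_true]
    split_ifs <;> simp_all <;> linarith
  · simp only [hh, min_eq_left hx.le, max_eq_right hx.le, indicator_apply, mem_Ico,
      not_le.2 hx, if_false]
    split_ifs <;> simp_all <;> linarith

lemma integrable_hh (x : ℝ) : Integrable (fun s => hh s x) (volume : Measure ℝ) := by
  rw [hh_eq_indicator]
  rw [integrable_indicator_iff measurableSet_Ico]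
  exact integrableOn_const (by rw [Real.volume_Ico]; exact ENNReal.ofReal_ne_top)

lemma integral_hh (x : ℝ) : ∫ s, hh s x = x := by
  rw [hh_eq_indicator, integral_indicator_const _ measurableSet_Ico]
  rcases le_or_gt 0 x with hx | hx
  · simp [min_eq_right hx, max_eq_left hx, Real.volume_Ico, hx, ENNReal.toReal_ofReal hx]
  · simp only [min_eq_left hx.le, max_eq_right hx.le, measureReal_def, Real.volume_Ico, not_le.2 hx, if_false,
      zero_sub, ENNReal.toReal_ofReal (neg_nonneg.2 hx.le), smul_eq_mul]
    ring

lemma abs_hh_eq (x : ℝ) : (fun s => |hh s x|) =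
    (Ico (min x 0) (max x 0)).indicator (1 : ℝ → ℝ) := by
  funext s
  have := congrFun (hh_eq_indicator x) s
  rw [this]
  simp only [indicator_apply, Pi.one_apply]
  split_ifs <;> simp

lemma integral_abs_hh (x : ℝ) : ∫ s, |hh s x| = |x| := by
  have hnn : (0:ℝ) ≤ max x 0 - min x 0 := by
    rcases le_or_gt 0 x with hx | hx
    · rw [min_eq_right hx, max_eq_left hx]; linarith
    · rw [min_eq_left hx.le, max_eq_right hx.le]; linarith
  rw [abs_hh_eq, integral_indicator_one measurableSet_Ico, measureReal_def, Real.volume_Ico,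
    ENNReal.toReal_ofReal hnn]
  rcases le_or_gt 0 x with hx | hx
  · simp [min_eq_right hx, max_eq_left hx, abs_of_nonneg hx]
  · simp [min_eq_left hx.le, max_eq_right hx.le, abs_of_neg hx]

lemma measurable_hh_pair :
    Measurable (fun q : (ℝ × ℝ) × ℝ × ℝ => hh q.1.1 q.2.1 * hh q.1.2 q.2.2) := by
  unfold hh
  refine Measurable.mul (Measurable.sub ?_ ?_) (Measurable.sub ?_ ?_)
  · exact Measurable.ite (measurableSet_lt measurable_fst.fst measurable_snd.fst)
      measurable_const measurable_const
  · exact Measurable.ite (measurableSet_lt measurable_fst.fst measurable_const)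
      measurable_const measurable_const
  · exact Measurable.ite (measurableSet_lt measurable_fst.snd measurable_snd.snd)
      measurable_const measurable_const
  · exact Measurable.ite (measurableSet_lt measurable_fst.snd measurable_const)
      measurable_const measurable_const

lemma integrable_big (π : Measure (ℝ × ℝ)) [IsProbabilityMeasure π]
    (hint : Integrable (fun p : ℝ × ℝ => |p.1| * |p.2|) π) :
    Integrable (fun q : (ℝ × ℝ) × ℝ × ℝ => hh q.1.1 q.2.1 * hh q.1.2 q.2.2)
      (((volume : Measure ℝ).prod volume).prod π) := by
  refine (integrable_prod_iff' measurable_hh_pair.aestronglyMeasurable).2 ⟨?_, ?_⟩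
  · exact Filter.Eventually.of_forall fun p =>
      (integrable_hh p.1).mul_prod (integrable_hh p.2)
  · have heq : (fun p : ℝ × ℝ =>
        ∫ st : ℝ × ℝ, ‖hh st.1 p.1 * hh st.2 p.2‖ ∂((volume : Measure ℝ).prod volume)) =
        fun p => |p.1| * |p.2| := by
      funext p
      simp_rw [norm_mul, Real.norm_eq_abs]
      rw [integral_prod_mul (fun s => |hh s p.1|) (fun t => |hh t p.2|),
        integral_abs_hh, integral_abs_hh]
    rw [heq]
    exact hint

lemma key_repr (π : Measure (ℝ × ℝ)) [IsProbabilityMeasure π]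
    (hint : Integrable (fun p : ℝ × ℝ => |p.1| * |p.2|) π) :
    ∫ p, p.1 * p.2 ∂π
      = ∫ st : ℝ × ℝ, (∫ p, hh st.1 p.1 * hh st.2 p.2 ∂π)
          ∂((volume : Measure ℝ).prod volume) := by
  have hbig := integrable_big π hint
  have hswap := integral_integral_swap
    (f := fun (st : ℝ × ℝ) (p : ℝ × ℝ) => hh st.1 p.1 * hh st.2 p.2)
    (μ := (volume : Measure ℝ).prod volume) (ν := π) hbig
  rw [show (∫ st : ℝ × ℝ, (∫ p, hh st.1 p.1 * hh st.2 p.2 ∂π)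
      ∂((volume : Measure ℝ).prod volume)) =
    ∫ p : ℝ × ℝ, (∫ st : ℝ × ℝ, hh st.1 p.1 * hh st.2 p.2
      ∂((volume : Measure ℝ).prod volume)) ∂π from hswap]
  refine integral_congr_ae (ae_of_all _ fun p => ?_)
  show p.1 * p.2 = ∫ st : ℝ × ℝ, hh st.1 p.1 * hh st.2 p.2 ∂((volume : Measure ℝ).prod volume)
  rw [integral_prod_mul (fun s => hh s p.1) (fun t => hh t p.2), integral_hh, integral_hh]

lemma K_expand (π : Measure (ℝ × ℝ)) [IsProbabilityMeasure π] (s t : ℝ) :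
    ∫ p, hh s p.1 * hh t p.2 ∂π
      = (π (Ioi s ×ˢ Ioi t)).toReal
        - (if s < 0 then (π {p : ℝ × ℝ | t < p.2}).toReal else 0)
        - (if t < 0 then (π {p : ℝ × ℝ | s < p.1}).toReal else 0)
        + (if s < 0 then (1:ℝ) else 0) * (if t < 0 then 1 else 0) := by
  have hS1 : MeasurableSet (Ioi s ×ˢ Ioi t : Set (ℝ × ℝ)) :=
    measurableSet_Ioi.prod measurableSet_Ioi
  have hS2 : MeasurableSet {p : ℝ × ℝ | t < p.2} := measurable_snd measurableSet_Ioi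
  have hS3 : MeasurableSet {p : ℝ × ℝ | s < p.1} := measurable_fst measurableSet_Ioi
  have hpt : ∀ p : ℝ × ℝ, hh s p.1 * hh t p.2
      = (Ioi s ×ˢ Ioi t).indicator (1 : ℝ × ℝ → ℝ) p
        - (if s < 0 then (1:ℝ) else 0) * ({p : ℝ × ℝ | t < p.2}.indicator (1 : ℝ × ℝ → ℝ) p)
        - ({p : ℝ × ℝ | s < p.1}.indicator (1 : ℝ × ℝ → ℝ) p) * (if t < 0 then (1:ℝ) else 0)
        + (if s < 0 then (1:ℝ) else 0) * (if t < 0 then 1 else 0) := by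
    intro p
    simp only [hh, indicator_apply, mem_prod, mem_Ioi, mem_setOf_eq, Pi.one_apply]
    split_ifs <;> simp_all <;> ring
  have h1 : Integrable ((Ioi s ×ˢ Ioi t).indicator (1 : ℝ × ℝ → ℝ)) π :=
    (integrable_const 1).indicator hS1
  have h2 : Integrable (fun p => (if s < 0 then (1:ℝ) else 0)
      * ({p : ℝ × ℝ | t < p.2}.indicator (1 : ℝ × ℝ → ℝ) p)) π :=
    ((integrable_const 1).indicator hS2).const_mul _
  have h3 : Integrable (fun p => ({p : ℝ × ℝ | s < p.1}.indicator (1 : ℝ × ℝ → ℝ) p)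
      * (if t < 0 then (1:ℝ) else 0)) π :=
    ((integrable_const 1).indicator hS3).mul_const _
  have h4 : Integrable (fun _ : ℝ × ℝ => (if s < 0 then (1:ℝ) else 0)
      * (if t < 0 then 1 else 0)) π := integrable_const _
  have h12 : Integrable (fun p : ℝ × ℝ => (Ioi s ×ˢ Ioi t).indicator (1 : ℝ × ℝ → ℝ) p
      - (if s < 0 then (1:ℝ) else 0) * ({p : ℝ × ℝ | t < p.2}.indicator (1 : ℝ × ℝ → ℝ) p)) π :=
    h1.sub h2
  have h123 : Integrable (fun p : ℝ × ℝ => (Ioi s ×ˢ Ioi t).indicator (1 : ℝ × ℝ → ℝ) p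
      - (if s < 0 then (1:ℝ) else 0) * ({p : ℝ × ℝ | t < p.2}.indicator (1 : ℝ × ℝ → ℝ) p)
      - ({p : ℝ × ℝ | s < p.1}.indicator (1 : ℝ × ℝ → ℝ) p) * (if t < 0 then (1:ℝ) else 0)) π :=
    h12.sub h3
  rw [integral_congr_ae (ae_of_all _ hpt), integral_add h123 h4,
    integral_sub h12 h3, integral_sub h1 h2, integral_indicator_one hS1,
    integral_const_mul, integral_mul_const, integral_indicator_one hS2,
    integral_indicator_one hS3, integral_const]
  simp [mul_comm, measureReal_def]

lemma K_mono {π π' : Measure (ℝ × ℝ)} [IsProbabilityMeasure π] [IsProbabilityMeasure π']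
    (hfst : π.map Prod.fst = π'.map Prod.fst) (hsnd : π.map Prod.snd = π'.map Prod.snd)
    {s t : ℝ} (hle : π (Ioi s ×ˢ Ioi t) ≤ π' (Ioi s ×ˢ Ioi t)) :
    ∫ p, hh s p.1 * hh t p.2 ∂π ≤ ∫ p, hh s p.1 * hh t p.2 ∂π' := by
  have e2 : π {p : ℝ × ℝ | t < p.2} = π' {p : ℝ × ℝ | t < p.2} := by
    have h1 : π {p : ℝ × ℝ | t < p.2} = (π.map Prod.snd) (Ioi t) :=
      (Measure.map_apply measurable_snd measurableSet_Ioi).symm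
    have h2 : π' {p : ℝ × ℝ | t < p.2} = (π'.map Prod.snd) (Ioi t) :=
      (Measure.map_apply measurable_snd measurableSet_Ioi).symm
    rw [h1, h2, hsnd]
  have e3 : π {p : ℝ × ℝ | s < p.1} = π' {p : ℝ × ℝ | s < p.1} := by
    have h1 : π {p : ℝ × ℝ | s < p.1} = (π.map Prod.fst) (Ioi s) :=
      (Measure.map_apply measurable_fst measurableSet_Ioi).symm
    have h2 : π' {p : ℝ × ℝ | s < p.1} = (π'.map Prod.fst) (Ioi s) :=
      (Measure.map_apply measurable_fst measurableSet_Ioi).symm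
    rw [h1, h2, hfst]
  rw [K_expand, K_expand, e2, e3]
  have : (π (Ioi s ×ˢ Ioi t)).toReal ≤ (π' (Ioi s ×ˢ Ioi t)).toReal :=
    ENNReal.toReal_le_toReal (measure_ne_top _ _) (measure_ne_top _ _) |>.2 hle
  linarith

noncomputable def qc (μ ν : Measure ℝ) : Measure (ℝ × ℝ) :=
  (volume.restrict (Ioo (0:ℝ) 1)).map
    (fun t => (quantile (cdf μ) t, quantile (cdf ν) t))

variable {ν : Measure ℝ} [IsProbabilityMeasure ν]

lemma measurable_pairQ (μ ν : Measure ℝ) [IsProbabilityMeasure μ] [IsProbabilityMeasure ν] :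
    Measurable (fun t => (quantile (cdf μ) t, quantile (cdf ν) t)) :=
  (measurable_quantile_cdf μ).prodMk (measurable_quantile_cdf ν)

instance : IsProbabilityMeasure (qc μ ν) :=
  Measure.isProbabilityMeasure_map (measurable_pairQ μ ν).aemeasurable

lemma qc_fst : (qc μ ν).map Prod.fst = μ := by
  rw [qc, Measure.map_map measurable_fst (measurable_pairQ μ ν)]
  exact map_quantile_cdf μ

lemma qc_snd : (qc μ ν).map Prod.snd = ν := by
  rw [qc, Measure.map_map measurable_snd (measurable_pairQ μ ν)]
  exact map_quantile_cdf ν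

lemma meas_Ioi_eq (μ : Measure ℝ) [IsProbabilityMeasure μ] (s : ℝ) :
    μ (Ioi s) = ENNReal.ofReal (1 - cdf μ s) := by
  have : Ioi s = (Iic s)ᶜ := compl_Iic.symm
  rw [this, measure_compl measurableSet_Iic (measure_ne_top _ _), measure_univ,
    ← ofReal_cdf μ s, ENNReal.ofReal_sub _ (cdf_nonneg μ s), ENNReal.ofReal_one]

lemma qc_prod_Ioi (s t : ℝ) :
    qc μ ν (Ioi s ×ˢ Ioi t) = min (μ (Ioi s)) (ν (Ioi t)) := by
  rw [qc, Measure.map_apply (measurable_pairQ μ ν) (measurableSet_Ioi.prod measurableSet_Ioi),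
    Measure.restrict_apply ((measurable_pairQ μ ν) (measurableSet_Ioi.prod measurableSet_Ioi))]
  have hFs : 0 ≤ cdf μ s := cdf_nonneg μ s
  have hGt : 0 ≤ cdf ν t := cdf_nonneg ν t
  have hFs1 : cdf μ s ≤ 1 := cdf_le_one μ s
  have hGt1 : cdf ν t ≤ 1 := cdf_le_one ν t
  have hset : (fun u => (quantile (cdf μ) u, quantile (cdf ν) u)) ⁻¹' (Ioi s ×ˢ Ioi t)
      ∩ Ioo 0 1 = Ioo (max (cdf μ s) (cdf ν t)) 1 := by
    ext u
    simp only [mem_inter_iff, mem_preimage, mem_prod, mem_Ioi, mem_Ioo, max_lt_iff]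
    constructor
    · rintro ⟨⟨h1, h2⟩, hu⟩
      refine ⟨⟨?_, ?_⟩, hu.2⟩
      · exact not_le.mp fun hle => absurd ((quantile_cdf_le_iff hu s).mpr hle) (not_le.2 h1)
      · exact not_le.mp fun hle => absurd ((quantile_cdf_le_iff hu t).mpr hle) (not_le.2 h2)
    · rintro ⟨⟨h1, h2⟩, hu1⟩
      have hu : u ∈ Ioo (0:ℝ) 1 := ⟨lt_of_le_of_lt hFs h1, hu1⟩
      refine ⟨⟨?_, ?_⟩, hu⟩
      · exact not_le.mp fun hle => absurd ((quantile_cdf_le_iff hu s).mp hle) (not_le.2 h1)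
      · exact not_le.mp fun hle => absurd ((quantile_cdf_le_iff hu t).mp hle) (not_le.2 h2)
  rw [hset, Real.volume_Ioo, meas_Ioi_eq μ s, meas_Ioi_eq ν t]
  rcases le_total (cdf μ s) (cdf ν t) with hle | hle
  · rw [max_eq_right hle, min_eq_right (ENNReal.ofReal_le_ofReal (by linarith))]
  · rw [max_eq_left hle, min_eq_left (ENNReal.ofReal_le_ofReal (by linarith))]

lemma coupling_prod_Ioi_le {π : Measure (ℝ × ℝ)}
    (hfst : π.map Prod.fst = μ) (hsnd : π.map Prod.snd = ν) (s t : ℝ) :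
    π (Ioi s ×ˢ Ioi t) ≤ qc μ ν (Ioi s ×ˢ Ioi t) := by
  rw [qc_prod_Ioi, le_min_iff]
  constructor
  · calc π (Ioi s ×ˢ Ioi t) ≤ π (Prod.fst ⁻¹' Ioi s) := measure_mono fun p hp => hp.1
    _ = μ (Ioi s) := by rw [← hfst, Measure.map_apply measurable_fst measurableSet_Ioi]
  · calc π (Ioi s ×ˢ Ioi t) ≤ π (Prod.snd ⁻¹' Ioi t) := measure_mono fun p hp => hp.2
    _ = ν (Ioi t) := by rw [← hsnd, Measure.map_apply measurable_snd measurableSet_Ioi]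

lemma coupling_int_sq_fst {π : Measure (ℝ × ℝ)}
    (hfst : π.map Prod.fst = μ) (hμ2 : Integrable (fun x => x ^ 2) μ) :
    Integrable (fun p : ℝ × ℝ => p.1 ^ 2) π := by
  have h := hμ2
  rw [← hfst] at h
  exact (integrable_map_measure ((measurable_id.pow_const 2).aestronglyMeasurable)
    measurable_fst.aemeasurable).mp h

lemma coupling_int_sq_snd {π : Measure (ℝ × ℝ)}
    (hsnd : π.map Prod.snd = ν) (hν2 : Integrable (fun x => x ^ 2) ν) :
    Integrable (fun p : ℝ × ℝ => p.2 ^ 2) π := by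
  have h := hν2
  rw [← hsnd] at h
  exact (integrable_map_measure ((measurable_id.pow_const 2).aestronglyMeasurable)
    measurable_snd.aemeasurable).mp h

lemma coupling_int_absmul {π : Measure (ℝ × ℝ)}
    (h1 : Integrable (fun p : ℝ × ℝ => p.1 ^ 2) π)
    (h2 : Integrable (fun p : ℝ × ℝ => p.2 ^ 2) π) :
    Integrable (fun p : ℝ × ℝ => |p.1| * |p.2|) π := by
  refine ((h1.add h2).div_const 2).mono'
    (measurable_fst.abs.mul measurable_snd.abs).aestronglyMeasurable
    (ae_of_all _ fun p => ?_)
  have hb : |p.1| * |p.2| ≤ (p.1 ^ 2 + p.2 ^ 2) / 2 := by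
    nlinarith [sq_nonneg (|p.1| - |p.2|), sq_abs p.1, sq_abs p.2, abs_nonneg p.1, abs_nonneg p.2]
  rw [Real.norm_eq_abs, abs_of_nonneg (mul_nonneg (abs_nonneg _) (abs_nonneg _))]
  exact hb

lemma coupling_int_mul {π : Measure (ℝ × ℝ)}
    (h1 : Integrable (fun p : ℝ × ℝ => p.1 ^ 2) π)
    (h2 : Integrable (fun p : ℝ × ℝ => p.2 ^ 2) π) :
    Integrable (fun p : ℝ × ℝ => p.1 * p.2) π := by
  refine (coupling_int_absmul h1 h2).mono'
    (measurable_fst.mul measurable_snd).aestronglyMeasurable (ae_of_all _ fun p => ?_)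
  rw [Real.norm_eq_abs, abs_mul]

lemma integral_mul_coupling_le {π : Measure (ℝ × ℝ)} [IsProbabilityMeasure π]
    (hfst : π.map Prod.fst = μ) (hsnd : π.map Prod.snd = ν)
    (hμ2 : Integrable (fun x => x ^ 2) μ) (hν2 : Integrable (fun x => x ^ 2) ν) :
    ∫ p, p.1 * p.2 ∂π ≤ ∫ p, p.1 * p.2 ∂(qc μ ν) := by
  have hint : Integrable (fun p : ℝ × ℝ => |p.1| * |p.2|) π :=
    coupling_int_absmul (coupling_int_sq_fst hfst hμ2) (coupling_int_sq_snd hsnd hν2)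
  have hintQ : Integrable (fun p : ℝ × ℝ => |p.1| * |p.2|) (qc μ ν) :=
    coupling_int_absmul (coupling_int_sq_fst qc_fst hμ2) (coupling_int_sq_snd qc_snd hν2)
  rw [key_repr π hint, key_repr (qc μ ν) hintQ]
  refine integral_mono ((integrable_big π hint).integral_prod_left)
    ((integrable_big (qc μ ν) hintQ).integral_prod_left) fun st => ?_
  exact K_mono (by rw [hfst, qc_fst]) (by rw [hsnd, qc_snd])
    (coupling_prod_Ioi_le hfst hsnd st.1 st.2)

lemma integral_sub_sq_coupling {π : Measure (ℝ × ℝ)} [IsProbabilityMeasure π]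
    (h1 : Integrable (fun p : ℝ × ℝ => p.1 ^ 2) π)
    (h2 : Integrable (fun p : ℝ × ℝ => p.2 ^ 2) π) :
    ∫ p, (p.1 - p.2) ^ 2 ∂π
      = ∫ p, p.1 ^ 2 ∂π + ∫ p, p.2 ^ 2 ∂π - 2 * ∫ p, p.1 * p.2 ∂π := by
  have hm := coupling_int_mul h1 h2
  have hpt : ∀ p : ℝ × ℝ, (p.1 - p.2) ^ 2 = p.1 ^ 2 + p.2 ^ 2 - 2 * (p.1 * p.2) :=
    fun p => by ring
  have h12 : Integrable (fun p : ℝ × ℝ => p.1 ^ 2 + p.2 ^ 2) π := h1.add h2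
  have hm2 : Integrable (fun p : ℝ × ℝ => 2 * (p.1 * p.2)) π := hm.const_mul 2
  rw [integral_congr_ae (ae_of_all _ hpt), integral_sub h12 hm2, integral_add h1 h2,
    integral_const_mul]

lemma coupling_fst_sq_integral {π : Measure (ℝ × ℝ)} (hfst : π.map Prod.fst = μ) :
    ∫ p, p.1 ^ 2 ∂π = ∫ x, x ^ 2 ∂μ := by
  rw [← hfst, integral_map (f := fun x : ℝ => x ^ 2) measurable_fst.aemeasurable
    ((measurable_id.pow_const 2).aestronglyMeasurable)]

lemma coupling_snd_sq_integral {π : Measure (ℝ × ℝ)} (hsnd : π.map Prod.snd = ν) :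
    ∫ p, p.2 ^ 2 ∂π = ∫ x, x ^ 2 ∂ν := by
  rw [← hsnd, integral_map (f := fun x : ℝ => x ^ 2) measurable_snd.aemeasurable
    ((measurable_id.pow_const 2).aestronglyMeasurable)]
/-- The squared 2-Wasserstein distance between two probability measures on ℝ with finite
second moments — defined as the infimum of `E[(X-Y)²]` over all couplings — equals
`∫_0^1 (F⁻¹(t) - G⁻¹(t))² dt`, where `F⁻¹, G⁻¹` are the quantile functions. -/
theorem wasserstein_sq_eq_quantile_integral
    (μ ν : Measure ℝ) [IsProbabilityMeasure μ] [IsProbabilityMeasure ν]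
    (h2μ : Integrable (fun x => x ^ 2) μ) (h2ν : Integrable (fun x => x ^ 2) ν) :
    sInf {c : ℝ | ∃ π : Measure (ℝ × ℝ), IsProbabilityMeasure π ∧
        π.map Prod.fst = μ ∧ π.map Prod.snd = ν ∧ c = ∫ p, (p.1 - p.2) ^ 2 ∂π}
      = ∫ t in Ioo (0 : ℝ) 1,
          (quantile (fun x => (μ (Iic x)).toReal) t
            - quantile (fun x => (ν (Iic x)).toReal) t) ^ 2 := by
  rw [cdf_fun_eq μ, cdf_fun_eq ν]
  have hRHS : (∫ t in Ioo (0:ℝ) 1, (quantile (cdf μ) t - quantile (cdf ν) t) ^ 2)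
      = ∫ p, (p.1 - p.2) ^ 2 ∂(qc μ ν) := by
    rw [qc, integral_map (f := fun p : ℝ × ℝ => (p.1 - p.2) ^ 2)
      (measurable_pairQ μ ν).aemeasurable
      (((measurable_fst.sub measurable_snd).pow_const 2).aestronglyMeasurable)]
  rw [hRHS]
  have hmem : (∫ p, (p.1 - p.2) ^ 2 ∂(qc μ ν)) ∈ {c : ℝ | ∃ π : Measure (ℝ × ℝ),
      IsProbabilityMeasure π ∧ π.map Prod.fst = μ ∧ π.map Prod.snd = ν ∧
      c = ∫ p, (p.1 - p.2) ^ 2 ∂π} :=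
    ⟨qc μ ν, inferInstance, qc_fst, qc_snd, rfl⟩
  have hlb : ∀ c ∈ {c : ℝ | ∃ π : Measure (ℝ × ℝ),
      IsProbabilityMeasure π ∧ π.map Prod.fst = μ ∧ π.map Prod.snd = ν ∧
      c = ∫ p, (p.1 - p.2) ^ 2 ∂π},
      (∫ p, (p.1 - p.2) ^ 2 ∂(qc μ ν)) ≤ c := by
    rintro c ⟨π, hπ, hfst, hsnd, rfl⟩
    haveI := hπ
    have h1 := coupling_int_sq_fst hfst h2μ
    have h2 := coupling_int_sq_snd hsnd h2ν
    have h1Q := coupling_int_sq_fst (qc_fst (μ := μ) (ν := ν)) h2μ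
    have h2Q := coupling_int_sq_snd (qc_snd (μ := μ) (ν := ν)) h2ν
    rw [integral_sub_sq_coupling h1 h2, integral_sub_sq_coupling h1Q h2Q,
      coupling_fst_sq_integral hfst, coupling_fst_sq_integral (qc_fst (μ := μ) (ν := ν)),
      coupling_snd_sq_integral hsnd, coupling_snd_sq_integral (qc_snd (μ := μ) (ν := ν))]
    have hmul := integral_mul_coupling_le hfst hsnd h2μ h2ν
    linarith
  exact le_antisymm (csInf_le ⟨_, hlb⟩ hmem) (le_csInf ⟨_, hmem⟩ hlb)
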